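/- Let C be a category with binary coproducts and let ι : Y → Z be a coproduct inclusion which satisfies (E2). Then for every binary coproduct diagram Y₁ → Y ← Y₂ there exists a pair of pullback squares with vertical morphisms ι₁ : Y₁ → Z₁, ι : Y → Z, ι₂ : Y₂ → Z₂, whose top row is Y₁ → Y ← Y₂ and whose bottom row Z₁ → Z ← Z₂ is a binary coproduct diagram. -/

import Mathlib

open CategoryTheory CategoryTheory.Limits

universe v u

variable {C : Type u} [Category.{v} C]

/-- `i₁ : X₁ ⟶ X` and `i₂ : X₂ ⟶ X` form a binary coproduct diagram. -/
def IsCoprodDiagram {X₁ X₂ X : C} (i₁ : X₁ ⟶ X) (i₂ : X₂ ⟶ X) : Prop :=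
  Nonempty (IsColimit (BinaryCofan.mk i₁ i₂))

/-- `p₁ : X ⟶ X₁` and `p₂ : X ⟶ X₂` form a binary product diagram. -/
def IsProdDiagram {X X₁ X₂ : C} (p₁ : X ⟶ X₁) (p₂ : X ⟶ X₂) : Prop :=
  Nonempty (IsLimit (BinaryFan.mk p₁ p₂))

/-- Condition (E1): pullbacks of `f` along both inclusions of any binary coproduct diagram
exist and the resulting legs form a binary coproduct diagram. -/
def SatE1 {A X : C} (f : A ⟶ X) : Prop :=
  ∀ {X₁ X₂ : C} (x₁ : X₁ ⟶ X) (x₂ : X₂ ⟶ X), IsCoprodDiagram x₁ x₂ →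
    ∃ (A₁ A₂ : C) (a₁ : A₁ ⟶ A) (a₂ : A₂ ⟶ A) (f₁ : A₁ ⟶ X₁) (f₂ : A₂ ⟶ X₂),
      IsPullback a₁ f₁ f x₁ ∧ IsPullback a₂ f₂ f x₂ ∧ IsCoprodDiagram a₁ a₂

/-- Condition (E2): in any commutative diagram over `f` whose rows are binary coproduct
diagrams, both squares are pullbacks. -/
def SatE2 {A X : C} (f : A ⟶ X) : Prop :=
  ∀ {A₁ A₂ X₁ X₂ : C} (a₁ : A₁ ⟶ A) (a₂ : A₂ ⟶ A) (x₁ : X₁ ⟶ X) (x₂ : X₂ ⟶ X)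
    (f₁ : A₁ ⟶ X₁) (f₂ : A₂ ⟶ X₂),
    a₁ ≫ f = f₁ ≫ x₁ → a₂ ≫ f = f₂ ≫ x₂ →
    IsCoprodDiagram x₁ x₂ → IsCoprodDiagram a₁ a₂ →
    IsPullback a₁ f₁ f x₁ ∧ IsPullback a₂ f₂ f x₂

/-- A morphism is extensive if it satisfies (E1) and (E2). -/
def Extensive {A X : C} (f : A ⟶ X) : Prop := SatE1 f ∧ SatE2 f

/-- Condition (C1): pushouts of `f` along both projections of any binary product diagram
exist and the resulting legs form a binary product diagram. -/
def SatC1 {A X : C} (f : A ⟶ X) : Prop :=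
  ∀ {A₁ A₂ : C} (p₁ : A ⟶ A₁) (p₂ : A ⟶ A₂), IsProdDiagram p₁ p₂ →
    ∃ (X₁ X₂ : C) (q₁ : X ⟶ X₁) (q₂ : X ⟶ X₂) (f₁ : A₁ ⟶ X₁) (f₂ : A₂ ⟶ X₂),
      IsPushout p₁ f f₁ q₁ ∧ IsPushout p₂ f f₂ q₂ ∧ IsProdDiagram q₁ q₂

/-- Condition (C2): in any commutative diagram over `f` whose rows are binary product
diagrams, both squares are pushouts. -/
def SatC2 {A X : C} (f : A ⟶ X) : Prop :=
  ∀ {A₁ A₂ X₁ X₂ : C} (p₁ : A ⟶ A₁) (p₂ : A ⟶ A₂) (q₁ : X ⟶ X₁) (q₂ : X ⟶ X₂)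
    (f₁ : A₁ ⟶ X₁) (f₂ : A₂ ⟶ X₂),
    p₁ ≫ f₁ = f ≫ q₁ → p₂ ≫ f₂ = f ≫ q₂ →
    IsProdDiagram p₁ p₂ → IsProdDiagram q₁ q₂ →
    IsPushout p₁ f f₁ q₁ ∧ IsPushout p₂ f f₂ q₂

/-- A morphism is coextensive if it satisfies (C1) and (C2). -/
def Coextensive {A X : C} (f : A ⟶ X) : Prop := SatC1 f ∧ SatC2 f

/-- A coproduct inclusion: a morphism admitting a complementary inclusion forming
a binary coproduct diagram. -/
def IsCoprodInclusion {A X : C} (ι : A ⟶ X) : Prop :=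
  ∃ (A' : C) (ι' : A' ⟶ X), IsCoprodDiagram ι ι'

/-- An extremal epimorphism: whenever `e = i ≫ m` with `m` a monomorphism, `m` is an
isomorphism. -/
def IsExtremalEpi {A B : C} (e : A ⟶ B) : Prop :=
  ∀ {I : C} (i : A ⟶ I) (m : I ⟶ B), Mono m → i ≫ m = e → IsIso m

/-- The binary strict refinement property for an object `X`. -/
def BinaryStrictRefinement (X : C) : Prop :=
  ∀ {A₁ A₂ B₁ B₂ : C} (a₁ : X ⟶ A₁) (a₂ : X ⟶ A₂) (b₁ : X ⟶ B₁) (b₂ : X ⟶ B₂),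
    IsProdDiagram a₁ a₂ → IsProdDiagram b₁ b₂ →
    ∃ (C₁₁ C₁₂ C₂₁ C₂₂ : C)
      (α₁₁ : A₁ ⟶ C₁₁) (α₁₂ : A₁ ⟶ C₁₂) (α₂₁ : A₂ ⟶ C₂₁) (α₂₂ : A₂ ⟶ C₂₂)
      (β₁₁ : B₁ ⟶ C₁₁) (β₁₂ : B₂ ⟶ C₁₂) (β₂₁ : B₁ ⟶ C₂₁) (β₂₂ : B₂ ⟶ C₂₂),
      a₁ ≫ α₁₁ = b₁ ≫ β₁₁ ∧ a₁ ≫ α₁₂ = b₂ ≫ β₁₂ ∧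
      a₂ ≫ α₂₁ = b₁ ≫ β₂₁ ∧ a₂ ≫ α₂₂ = b₂ ≫ β₂₂ ∧
      IsProdDiagram α₁₁ α₁₂ ∧ IsProdDiagram α₂₁ α₂₂ ∧
      IsProdDiagram β₁₁ β₂₁ ∧ IsProdDiagram β₁₂ β₂₂

/-- A jointly monomorphic pair which is a reflexive, symmetric and transitive relation. -/
def IsEquivalenceRelationPair {R X : C} (r₁ r₂ : R ⟶ X) : Prop :=
  (∀ {T : C} (a b : T ⟶ R), a ≫ r₁ = b ≫ r₁ → a ≫ r₂ = b ≫ r₂ → a = b) ∧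
  (∃ d : X ⟶ R, d ≫ r₁ = 𝟙 X ∧ d ≫ r₂ = 𝟙 X) ∧
  (∃ s : R ⟶ R, s ≫ r₁ = r₂ ∧ s ≫ r₂ = r₁) ∧
  (∀ {P : C} (p₁ p₂ : P ⟶ R), IsPullback p₁ p₂ r₂ r₁ →
    ∃ t : P ⟶ R, t ≫ r₁ = p₁ ≫ r₁ ∧ t ≫ r₂ = p₂ ≫ r₂)

/-- A coproduct inclusion satisfying (E2) admits, over every binary coproduct decomposition
of its domain, a pair of pullback squares whose bottom row is a binary coproduct diagram. -/
theorem coprodInclusion_satE2_pullback_squares [HasBinaryCoproducts C] {Y Z : C}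
    (ι : Y ⟶ Z) (hinc : IsCoprodInclusion ι) (hE2 : SatE2 ι) :
    ∀ {Y₁ Y₂ : C} (y₁ : Y₁ ⟶ Y) (y₂ : Y₂ ⟶ Y), IsCoprodDiagram y₁ y₂ →
      ∃ (Z₁ Z₂ : C) (z₁ : Z₁ ⟶ Z) (z₂ : Z₂ ⟶ Z) (ι₁ : Y₁ ⟶ Z₁) (ι₂ : Y₂ ⟶ Z₂),
        IsPullback y₁ ι₁ ι z₁ ∧ IsPullback y₂ ι₂ ι z₂ ∧ IsCoprodDiagram z₁ z₂ := by
  obtain ⟨Y', ι', ⟨hZ⟩⟩ := hinc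
  rintro Y₁ Y₂ y₁ y₂ ⟨hY⟩
  refine ⟨Y₁ ⨿ Y', Y₂, coprod.desc (y₁ ≫ ι) ι', y₂ ≫ ι, coprod.inl, 𝟙 Y₂, ?_⟩
  have hcop : IsCoprodDiagram (coprod.desc (y₁ ≫ ι) ι' : Y₁ ⨿ Y' ⟶ Z) (y₂ ≫ ι) := by
    refine ⟨BinaryCofan.IsColimit.mk _
      (fun {T} g₁ g₂ => hZ.desc (BinaryCofan.mk
        (hY.desc (BinaryCofan.mk (coprod.inl ≫ g₁) g₂)) (coprod.inr ≫ g₁)))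
      ?_ ?_ ?_⟩
    · intro T g₁ g₂
      apply coprod.hom_ext
      · have h1 := hZ.fac (BinaryCofan.mk
          (hY.desc (BinaryCofan.mk (coprod.inl ≫ g₁) g₂)) (coprod.inr ≫ g₁)) ⟨WalkingPair.left⟩
        have h2 := hY.fac (BinaryCofan.mk (coprod.inl ≫ g₁) g₂) ⟨WalkingPair.left⟩
        simp only [BinaryCofan.mk_pt, BinaryCofan.ι_app_left, BinaryCofan.mk_inl] at h1 h2
        replace h1 : ι ≫ hZ.desc (BinaryCofan.mk (hY.desc (BinaryCofan.mk (coprod.inl ≫ g₁) g₂)) (coprod.inr ≫ g₁)) = hY.desc (BinaryCofan.mk (coprod.inl ≫ g₁) g₂) := h1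
        show coprod.inl ≫ coprod.desc (y₁ ≫ ι) ι' ≫ hZ.desc (BinaryCofan.mk (hY.desc (BinaryCofan.mk (coprod.inl ≫ g₁) g₂)) (coprod.inr ≫ g₁)) = coprod.inl ≫ g₁
        exact (coprod.inl_desc_assoc (y₁ ≫ ι) ι' _).trans ((Category.assoc y₁ ι _).trans ((congrArg (fun k => y₁ ≫ k) h1).trans h2))
      · have h1 := hZ.fac (BinaryCofan.mk
          (hY.desc (BinaryCofan.mk (coprod.inl ≫ g₁) g₂)) (coprod.inr ≫ g₁)) ⟨WalkingPair.right⟩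
        simp only [BinaryCofan.mk_pt, BinaryCofan.ι_app_right, BinaryCofan.mk_inr] at h1
        replace h1 : ι' ≫ hZ.desc (BinaryCofan.mk (hY.desc (BinaryCofan.mk (coprod.inl ≫ g₁) g₂)) (coprod.inr ≫ g₁)) = coprod.inr ≫ g₁ := h1
        show coprod.inr ≫ coprod.desc (y₁ ≫ ι) ι' ≫ hZ.desc (BinaryCofan.mk (hY.desc (BinaryCofan.mk (coprod.inl ≫ g₁) g₂)) (coprod.inr ≫ g₁)) = coprod.inr ≫ g₁
        exact (coprod.inr_desc_assoc (y₁ ≫ ι) ι' _).trans h1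
    · intro T g₁ g₂
      have h1 := hZ.fac (BinaryCofan.mk
        (hY.desc (BinaryCofan.mk (coprod.inl ≫ g₁) g₂)) (coprod.inr ≫ g₁)) ⟨WalkingPair.left⟩
      have h2 := hY.fac (BinaryCofan.mk (coprod.inl ≫ g₁) g₂) ⟨WalkingPair.right⟩
      simp only [BinaryCofan.mk_pt, BinaryCofan.ι_app_left, BinaryCofan.ι_app_right,
        BinaryCofan.mk_inl, BinaryCofan.mk_inr] at h1 h2
      replace h1 : ι ≫ hZ.desc (BinaryCofan.mk (hY.desc (BinaryCofan.mk (coprod.inl ≫ g₁) g₂)) (coprod.inr ≫ g₁)) = hY.desc (BinaryCofan.mk (coprod.inl ≫ g₁) g₂) := h1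
      show (y₂ ≫ ι) ≫ hZ.desc (BinaryCofan.mk (hY.desc (BinaryCofan.mk (coprod.inl ≫ g₁) g₂)) (coprod.inr ≫ g₁)) = g₂
      exact (Category.assoc y₂ ι _).trans ((congrArg (fun k => y₂ ≫ k) h1).trans h2)
    · intro T g₁ g₂ m hm₁ hm₂
      apply hZ.hom_ext
      rintro ⟨(_ | _)⟩
      · have h1 := hZ.fac (BinaryCofan.mk
          (hY.desc (BinaryCofan.mk (coprod.inl ≫ g₁) g₂)) (coprod.inr ≫ g₁)) ⟨WalkingPair.left⟩
        simp only [BinaryCofan.mk_pt, BinaryCofan.ι_app_left, BinaryCofan.mk_inl] at h1 ⊢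
        replace h1 : ι ≫ hZ.desc (BinaryCofan.mk (hY.desc (BinaryCofan.mk (coprod.inl ≫ g₁) g₂)) (coprod.inr ≫ g₁)) = hY.desc (BinaryCofan.mk (coprod.inl ≫ g₁) g₂) := h1
        show ι ≫ m = ι ≫ hZ.desc (BinaryCofan.mk (hY.desc (BinaryCofan.mk (coprod.inl ≫ g₁) g₂)) (coprod.inr ≫ g₁))
        rw [h1]
        apply hY.hom_ext
        rintro ⟨(_ | _)⟩
        · have h2 := hY.fac (BinaryCofan.mk (coprod.inl ≫ g₁) g₂) ⟨WalkingPair.left⟩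
          simp only [BinaryCofan.mk_pt, BinaryCofan.ι_app_left, BinaryCofan.mk_inl] at h2 ⊢
          replace h2 : y₁ ≫ hY.desc (BinaryCofan.mk (coprod.inl ≫ g₁) g₂) = coprod.inl ≫ g₁ := h2
          show y₁ ≫ ι ≫ m = y₁ ≫ hY.desc (BinaryCofan.mk (coprod.inl ≫ g₁) g₂)
          rw [h2, ← hm₁]
          show y₁ ≫ ι ≫ m = coprod.inl ≫ coprod.desc (y₁ ≫ ι) ι' ≫ m
          exact (Category.assoc y₁ ι m).symm.trans (coprod.inl_desc_assoc (y₁ ≫ ι) ι' m).symm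
        · have h2 := hY.fac (BinaryCofan.mk (coprod.inl ≫ g₁) g₂) ⟨WalkingPair.right⟩
          simp only [BinaryCofan.mk_pt, BinaryCofan.ι_app_right, BinaryCofan.mk_inr] at h2 ⊢
          replace h2 : y₂ ≫ hY.desc (BinaryCofan.mk (coprod.inl ≫ g₁) g₂) = g₂ := h2
          show y₂ ≫ ι ≫ m = y₂ ≫ hY.desc (BinaryCofan.mk (coprod.inl ≫ g₁) g₂)
          rw [h2, ← hm₂]
          show y₂ ≫ ι ≫ m = (y₂ ≫ ι) ≫ m
          exact (Category.assoc y₂ ι m).symm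
      · have h1 := hZ.fac (BinaryCofan.mk
          (hY.desc (BinaryCofan.mk (coprod.inl ≫ g₁) g₂)) (coprod.inr ≫ g₁)) ⟨WalkingPair.right⟩
        simp only [BinaryCofan.mk_pt, BinaryCofan.ι_app_right, BinaryCofan.mk_inr] at h1 ⊢
        replace h1 : ι' ≫ hZ.desc (BinaryCofan.mk (hY.desc (BinaryCofan.mk (coprod.inl ≫ g₁) g₂)) (coprod.inr ≫ g₁)) = coprod.inr ≫ g₁ := h1
        show ι' ≫ m = ι' ≫ hZ.desc (BinaryCofan.mk (hY.desc (BinaryCofan.mk (coprod.inl ≫ g₁) g₂)) (coprod.inr ≫ g₁))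
        rw [h1, ← hm₁]
        show ι' ≫ m = coprod.inr ≫ coprod.desc (y₁ ≫ ι) ι' ≫ m
        exact (coprod.inr_desc_assoc (y₁ ≫ ι) ι' m).symm
  obtain ⟨hp₁, hp₂⟩ := hE2 y₁ y₂ (coprod.desc (y₁ ≫ ι) ι') (y₂ ≫ ι) coprod.inl (𝟙 Y₂)
    (coprod.inl_desc _ _).symm (Category.id_comp _).symm hcop ⟨hY⟩
  exact ⟨hp₁, hp₂, hcop⟩
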